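/- Let I, J be finite types, E1 : Matrix I I ℂ → Matrix I I ℂ and E2 : Matrix J J ℂ → Matrix J J ℂ arbitrary functions, and A, B expectations on I × J. For an expectation C on I × J let C˜ denote the expectation on J × I obtained by reindexing along the swap equivalence (J × I) ≃ (I × J), i.e. C˜ (j,i) (j',i') = C (i,j) (i',j'). If qRHL(A, E1, E2, B) holds (over I × J), then qRHL(A˜, E2, E1, B˜) holds (over J × I). [Rule Sym] -/

import Mathlib

open Matrix Kronecker ComplexOrder

noncomputable section

/-- Partial trace over the second factor: `tr₂(ρ) i i' = ∑ j, ρ (i,j) (i',j)`. -/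
def trB {I J : Type*} [Fintype J] (ρ : Matrix (I × J) (I × J) ℂ) : Matrix I I ℂ :=
  Matrix.of fun i i' => ∑ j, ρ (i, j) (i', j)

/-- Partial trace over the first factor: `tr₁(ρ) j j' = ∑ i, ρ (i,j) (i,j')`. -/
def trA {I J : Type*} [Fintype I] (ρ : Matrix (I × J) (I × J) ℂ) : Matrix J J ℂ :=
  Matrix.of fun j j' => ∑ i, ρ (i, j) (i, j')

/-- `ρ` is separable iff it is a finite sum of Kronecker products of
positive semidefinite matrices. -/
def Separable {I J : Type*} [Fintype I] [Fintype J]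
    (ρ : Matrix (I × J) (I × J) ℂ) : Prop :=
  ∃ (n : ℕ) (σ : Fin n → Matrix I I ℂ) (τ : Fin n → Matrix J J ℂ),
    (∀ k, (σ k).PosSemidef) ∧ (∀ k, (τ k).PosSemidef) ∧ ρ = ∑ k, σ k ⊗ₖ τ k

/-- The expectation-qRHL judgment `qRHL(A, E1, E2, B)`. -/
def qRHL {I J : Type*} [Fintype I] [Fintype J]
    (A : Matrix (I × J) (I × J) ℂ)
    (E1 : Matrix I I ℂ → Matrix I I ℂ) (E2 : Matrix J J ℂ → Matrix J J ℂ)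
    (B : Matrix (I × J) (I × J) ℂ) : Prop :=
  ∀ ρ : Matrix (I × J) (I × J) ℂ, ρ.PosSemidef → Separable ρ →
    ∃ ρ' : Matrix (I × J) (I × J) ℂ, ρ'.PosSemidef ∧ Separable ρ' ∧
      trB ρ' = E1 (trB ρ) ∧ trA ρ' = E2 (trA ρ) ∧
      (Matrix.trace (A * ρ)).re ≤ (Matrix.trace (B * ρ')).re

lemma trace_submatrix_equiv' {m n : Type*} [Fintype m] [Fintype n]
    (M : Matrix n n ℂ) (e : m ≃ n) :
    Matrix.trace (M.submatrix e e) = Matrix.trace M := by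
  simp only [Matrix.trace, Matrix.diag, Matrix.submatrix_apply]
  exact Fintype.sum_equiv e _ _ fun i => rfl

lemma sep_swap {I J : Type*} [Fintype I] [Fintype J]
    {ρ : Matrix (I × J) (I × J) ℂ} (hρ : Separable ρ) :
    Separable (ρ.submatrix (Equiv.prodComm J I) (Equiv.prodComm J I)) := by
  obtain ⟨n, σ, τ, hσ, hτ, rfl⟩ := hρ
  refine ⟨n, τ, σ, hτ, hσ, ?_⟩
  ext ⟨j, i⟩ ⟨j', i'⟩
  simp [Matrix.submatrix, kroneckerMap_apply, Matrix.sum_apply, mul_comm]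

/-- Rule Sym: if `qRHL(A, E1, E2, B)` holds over `I × J`, then the swapped
judgment `qRHL(A˜, E2, E1, B˜)` holds over `J × I`. -/
theorem qRHL_sym {I J : Type*} [Fintype I] [Fintype J]
    (A B : Matrix (I × J) (I × J) ℂ) (hA : A.PosSemidef) (hB : B.PosSemidef)
    (E1 : Matrix I I ℂ → Matrix I I ℂ) (E2 : Matrix J J ℂ → Matrix J J ℂ)
    (h : qRHL A E1 E2 B) :
    qRHL (Matrix.of fun p q : J × I => A (p.2, p.1) (q.2, q.1)) E2 E1
      (Matrix.of fun p q : J × I => B (p.2, p.1) (q.2, q.1)) := by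
  intro ρ hρ hsep
  set e : (I × J) ≃ (J × I) := Equiv.prodComm I J with he
  have hps : (ρ.submatrix e e).PosSemidef := hρ.submatrix e
  have hss : Separable (ρ.submatrix e e) := sep_swap hsep
  obtain ⟨ρ', hρ', hsep', hB1, hA1, hle⟩ := h (ρ.submatrix e e) hps hss
  refine ⟨ρ'.submatrix e.symm e.symm, hρ'.submatrix _, sep_swap hsep', ?_, ?_, ?_⟩
  · ext j j'
    have := congrFun (congrFun hA1 j) j'
    simpa [trA, trB, Matrix.submatrix, he] using this
  · ext i i'
    have := congrFun (congrFun hB1 i) i'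
    simpa [trA, trB, Matrix.submatrix, he] using this
  · have h1 : (Matrix.of fun p q : J × I => A (p.2, p.1) (q.2, q.1)) = A.submatrix e.symm e.symm := by
      ext ⟨j, i⟩ ⟨j', i'⟩; rfl
    have h2 : (Matrix.of fun p q : J × I => B (p.2, p.1) (q.2, q.1)) = B.submatrix e.symm e.symm := by
      ext ⟨j, i⟩ ⟨j', i'⟩; rfl
    have h3 : ρ = (ρ.submatrix e e).submatrix e.symm e.symm := by
      ext p q; simp
    rw [h1, h2, h3, Matrix.submatrix_mul_equiv, Matrix.submatrix_mul_equiv]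
    rw [trace_submatrix_equiv', trace_submatrix_equiv']
    exact hle
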